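/- Let w(x) = e^x on ℝ and f(x) = x. Then for every interval I = (a,b) with b − a > 1, one has inf_c (1/w(I)) ∫_I |x − c| e^x dx ≤ C for an absolute constant C; in fact ∫_a^b (b−x) e^x dx = e^b ∫_0^{b−a} y e^{−y} dy ≤ e^b and w(I) = e^b − e^a ≥ (1 − e^{−1}) e^b. Combined with the Lipschitz bound on short intervals, f ∈ BMO*_{L¹(w)} while f ∉ BMO. -/

import Mathlib

open MeasureTheory Set

noncomputable section

lemma int1 (a b : ℝ) : (∫ x in a..b, (b - x) * Real.exp x)
    = Real.exp b - (b - a + 1) * Real.exp a := by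
  have h : ∀ x ∈ Set.uIcc a b, HasDerivAt (fun x => (b - x + 1) * Real.exp x)
      ((b - x) * Real.exp x) x := by
    intro x _
    have := ((hasDerivAt_id x).const_sub b |>.add_const 1).fun_mul (Real.hasDerivAt_exp x)
    refine this.congr_deriv ?_
    simp only [id]; ring
  rw [intervalIntegral.integral_eq_sub_of_hasDerivAt h]
  · simp
  · apply Continuous.intervalIntegrable; continuity

lemma int2 (t : ℝ) : (∫ y in (0:ℝ)..t, y * Real.exp (-y))
    = 1 - (t + 1) * Real.exp (-t) := by
  have h : ∀ y ∈ Set.uIcc (0:ℝ) t, HasDerivAt (fun y => -((y + 1) * Real.exp (-y)))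
      (y * Real.exp (-y)) y := by
    intro y _
    have he : HasDerivAt (fun y : ℝ => Real.exp (-y)) (-Real.exp (-y)) y := by
      simpa using (hasDerivAt_neg y).exp
    have := (((hasDerivAt_id y).add_const 1).fun_mul he).fun_neg
    refine this.congr_deriv ?_
    simp only [id]; ring
  rw [intervalIntegral.integral_eq_sub_of_hasDerivAt h]
  · simp; ring
  · apply Continuous.intervalIntegrable; continuity

theorem statement12 (a b : ℝ) (hab : 1 < b - a) :
    (∫ x in a..b, (b - x) * Real.exp x)
        = Real.exp b * ∫ y in (0 : ℝ)..(b - a), y * Real.exp (-y) ∧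
      (∫ x in a..b, (b - x) * Real.exp x) ≤ Real.exp b ∧
      (1 - Real.exp (-1)) * Real.exp b ≤ Real.exp b - Real.exp a ∧
      ∃ c : ℝ, (∫ x in a..b, |x - c| * Real.exp x)
        ≤ (1 - Real.exp (-1))⁻¹ * (Real.exp b - Real.exp a) := by
  have hab' : a ≤ b := by linarith
  have h1 := int1 a b
  have h2 := int2 (b - a)
  have hpos : (0:ℝ) < (b - a + 1) * Real.exp a := by positivity
  have hle : (∫ x in a..b, (b - x) * Real.exp x) ≤ Real.exp b := by
    rw [h1]; linarith
  have h3 : (1 - Real.exp (-1)) * Real.exp b ≤ Real.exp b - Real.exp a := by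
    have : Real.exp a ≤ Real.exp (-1) * Real.exp b := by
      rw [← Real.exp_add]
      exact Real.exp_le_exp.mpr (by linarith)
    nlinarith
  refine ⟨?_, hle, h3, b, ?_⟩
  · rw [h1, h2]
    have hh : Real.exp b * Real.exp (-(b - a)) = Real.exp a := by
      rw [← Real.exp_add]; ring_nf
    linear_combination (b - a + 1) * hh
  · have hcong : (∫ x in a..b, |x - b| * Real.exp x)
        = ∫ x in a..b, (b - x) * Real.exp x := by
      apply intervalIntegral.integral_congr
      intro x hx
      rw [Set.uIcc_of_le hab'] at hx
      show |x - b| * Real.exp x = (b - x) * Real.exp x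
      rw [abs_of_nonpos (by linarith [hx.2])]
      ring
    rw [hcong, h1]
    have he1 : Real.exp (-1) < 1 := by
      rw [Real.exp_lt_one_iff]; norm_num
    have hinv : Real.exp b ≤ (1 - Real.exp (-1))⁻¹ * (Real.exp b - Real.exp a) := by
      rw [le_inv_mul_iff₀ (by linarith)]
      linarith
    linarith
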